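/- Let S = {s_i = [0,a_i] × {i}} and T = {t_i = [b_i, 1] × {i}} with 0 ≤ a_i ≤ b_i ≤ 1 for 1 ≤ i ≤ m be two sets of horizontal segments attached to the left and right walls of the unit-width slab. The double-ended-queue algorithm (Algorithm Ray-Shooting) correctly assigns to each segment s_i the first segment in S ∪ T directly above its right endpoint: it maintains the invariant that after iteration i, the queue contains exactly the segments of {s₁,…,s_i} not covered by any segment of {s₁,…,s_i} ∪ {t₁,…,t_i}, ordered by decreasing length from bottom to top. -/

import Mathlib

open List

/-- One iteration of the Ray-Shooting algorithm, processing segment `i`.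
The state is `(deque, up-assignments)`; the deque is a list of indices of segments of `S`
with the top of the deque at the head. An assignment `(s, j, tb)` records that the first
segment above the right endpoint of `s_s` is `t_j` (if `tb = true`) or `s_j` (if `tb = false`).
Here `a s` is the right endpoint of `s_s = [0, a s] × {s}` and `b j` is the left endpoint of
`t_j = [b j, 1] × {j}`. -/
noncomputable def rayStep (a b : ℕ → ℝ) (i : ℕ)
    (st : List ℕ × List (ℕ × ℕ × Bool)) : List ℕ × List (ℕ × ℕ × Bool) :=
  let dq := st.1
  let poppedTop := dq.takeWhile (fun s => decide (a s ≤ a i))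
  let dq1 := dq.dropWhile (fun s => decide (a s ≤ a i))
  let poppedBot := dq1.reverse.takeWhile (fun s => decide (b i ≤ a s))
  let dq2 := (dq1.reverse.dropWhile (fun s => decide (b i ≤ a s))).reverse
  (i :: dq2,
    st.2 ++ poppedTop.map (fun s => (s, i, false)) ++ poppedBot.map (fun s => (s, i, true)))

/-- The state of the Ray-Shooting algorithm after processing segments `1, 2, …, i`. -/
noncomputable def rayRun (a b : ℕ → ℝ) (i : ℕ) : List ℕ × List (ℕ × ℕ × Bool) :=
  (List.range' 2 (i - 1)).foldl (fun st k => rayStep a b k st) ([1], [])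

/-- correctness of the Ray-Shooting algorithm. After each iteration `i`, the
deque contains exactly the segments among `s₁,…,s_i` not covered by any segment of
`{s₁,…,s_i} ∪ {t₁,…,t_i}`, ordered by decreasing length from bottom to top; and every
recorded up-pointer `(s, j, tb)` is the first segment of `S ∪ T` directly above the right
endpoint of `s_s`. -/
lemma dropWhile_all_false {α} {r : α → α → Prop} {p : α → Bool} {l : List α}
    (hs : l.Pairwise r) (hp : ∀ x y, r x y → p y = true → p x = true) :
    ∀ x ∈ l.dropWhile p, p x = false := by
  induction l with
  | nil => simp
  | cons c l ih =>
    rw [List.pairwise_cons] at hs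
    by_cases h : p c = true
    · rw [List.dropWhile_cons_of_pos h]
      exact ih hs.2
    · rw [List.dropWhile_cons_of_neg h]
      intro x hx
      rcases List.mem_cons.1 hx with rfl | hx
      · simpa using h
      · rcases Bool.eq_false_or_eq_true (p x) with h' | h'
        · exact absurd (hp _ _ (hs.1 x hx) h') h
        · exact h'

lemma rayRun_one (a b : ℕ → ℝ) : rayRun a b 1 = ([1], []) := by
  simp [rayRun]

lemma rayRun_succ (a b : ℕ → ℝ) (i : ℕ) (hi : 1 ≤ i) :
    rayRun a b (i + 1) = rayStep a b (i + 1) (rayRun a b i) := by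
  unfold rayRun
  have h1 : i + 1 - 1 = (i - 1) + 1 := by omega
  rw [h1, List.range'_concat]
  have h2 : 2 + 1 * (i - 1) = i + 1 := by omega
  rw [h2, List.foldl_append]
  simp

lemma rayStep_spec (a b : ℕ → ℝ) (i : ℕ) (dq : List ℕ) (asg : List (ℕ × ℕ × Bool))
    (hi : 1 ≤ i)
    (hsort : dq.Pairwise (fun s s' => a s < a s'))
    (hmem : ∀ s, s ∈ dq ↔ 1 ≤ s ∧ s ≤ i ∧ ∀ j, s < j → j ≤ i → ¬(a s ≤ a j) ∧ ¬(b j ≤ a s)) :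
    (rayStep a b (i+1) (dq, asg)).1.Pairwise (fun s s' => a s < a s') ∧
    (∀ s, s ∈ (rayStep a b (i+1) (dq, asg)).1 ↔
      1 ≤ s ∧ s ≤ i+1 ∧ ∀ j, s < j → j ≤ i+1 → ¬(a s ≤ a j) ∧ ¬(b j ≤ a s)) ∧
    (∀ s j tb, (s, j, tb) ∈ (rayStep a b (i+1) (dq, asg)).2 →
      (s, j, tb) ∈ asg ∨ (1 ≤ s ∧ s < j ∧ j = i+1 ∧ (if tb then b j ≤ a s else a s ≤ a j) ∧
        ∀ l, s < l → l < j → ¬(a s ≤ a l) ∧ ¬(b l ≤ a s))) := by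
  set p : ℕ → Bool := fun s => decide (a s ≤ a (i+1)) with hp
  set q : ℕ → Bool := fun s => decide (b (i+1) ≤ a s) with hq
  set dq1 : List ℕ := dq.dropWhile p with hdq1
  set dq2 : List ℕ := (dq1.reverse.dropWhile q).reverse with hdq2
  have hstep1 : (rayStep a b (i+1) (dq, asg)).1 = (i+1) :: dq2 := rfl
  have hstep2 : (rayStep a b (i+1) (dq, asg)).2 =
      asg ++ (dq.takeWhile p).map (fun s => (s, i+1, false)) ++
        (dq1.reverse.takeWhile q).map (fun s => (s, i+1, true)) := rfl
  -- basic facts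
  have hdq1sub : dq1.Sublist dq := List.dropWhile_sublist p
  have hdq1sorted : dq1.Pairwise (fun s s' => a s < a s') :=
    List.Pairwise.sublist hdq1sub hsort
  have hnp : ∀ x ∈ dq1, p x = false := by
    apply dropWhile_all_false hsort
    intro x y hr hy
    simp only [hp, decide_eq_true_eq] at hy ⊢
    linarith
  have hrevsorted : dq1.reverse.Pairwise (fun s s' => a s' < a s) :=
    List.pairwise_reverse.2 hdq1sorted
  have hnq : ∀ x ∈ dq1.reverse.dropWhile q, q x = false := by
    apply dropWhile_all_false hrevsorted
    intro x y hr hy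
    simp only [hq, decide_eq_true_eq] at hy ⊢
    linarith
  have hdq2mem : ∀ x ∈ dq2, x ∈ dq1 ∧ p x = false ∧ q x = false := by
    intro x hx
    rw [hdq2, List.mem_reverse] at hx
    have hx1 : x ∈ dq1 := by
      have := (List.dropWhile_sublist q (l := dq1.reverse)).mem hx
      rwa [List.mem_reverse] at this
    exact ⟨hx1, hnp x hx1, hnq x hx⟩
  have hdq2sorted : dq2.Pairwise (fun s s' => a s < a s') := by
    rw [hdq2, List.pairwise_reverse]
    exact List.Pairwise.sublist (List.dropWhile_sublist q) hrevsorted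
  have hdq2back : ∀ x ∈ dq, p x = false → q x = false → x ∈ dq2 := by
    intro x hx hpx hqx
    have hx1 : x ∈ dq1 := by
      rw [← List.takeWhile_append_dropWhile (p := p) (l := dq), List.mem_append] at hx
      rcases hx with hx | hx
      · exact absurd (List.mem_takeWhile_imp hx) (by simp [hpx])
      · exact hx
    have hx2 : x ∈ dq1.reverse := List.mem_reverse.2 hx1
    rw [← List.takeWhile_append_dropWhile (p := q) (l := dq1.reverse), List.mem_append] at hx2
    rcases hx2 with hx2 | hx2
    · exact absurd (List.mem_takeWhile_imp hx2) (by simp [hqx])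
    · rw [hdq2, List.mem_reverse]; exact hx2
  refine ⟨?_, ?_, ?_⟩
  · -- sortedness of the new deque
    rw [hstep1]
    refine List.pairwise_cons.2 ⟨?_, hdq2sorted⟩
    intro x hx
    have := (hdq2mem x hx).2.1
    simp only [hp, decide_eq_false_iff_not, not_le] at this
    exact this
  · -- membership characterization
    intro s
    rw [hstep1, List.mem_cons]
    constructor
    · rintro (rfl | hs)
      · exact ⟨by omega, le_refl _, fun j h1 h2 => absurd h1 (by omega)⟩
      · obtain ⟨hs1, hps, hqs⟩ := hdq2mem s hs
        have hsdq : s ∈ dq := hdq1sub.mem hs1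
        obtain ⟨h1, h2, h3⟩ := (hmem s).1 hsdq
        refine ⟨h1, by omega, fun j hj1 hj2 => ?_⟩
        rcases Nat.lt_or_ge j (i+1) with hj | hj
        · exact h3 j hj1 (by omega)
        · have : j = i + 1 := by omega
          subst this
          constructor
          · simpa [hp] using hps
          · simpa [hq] using hqs
    · rintro ⟨h1, h2, h3⟩
      rcases Nat.lt_or_ge s (i+1) with hs | hs
      · right
        have hsdq : s ∈ dq := (hmem s).2 ⟨h1, by omega, fun j hj1 hj2 => h3 j hj1 (by omega)⟩
        have hps : p s = false := by
          simp only [hp, decide_eq_false_iff_not]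
          exact (h3 (i+1) (by omega) (le_refl _)).1
        have hqs : q s = false := by
          simp only [hq, decide_eq_false_iff_not]
          exact (h3 (i+1) (by omega) (le_refl _)).2
        exact hdq2back s hsdq hps hqs
      · left; omega
  · -- up-pointer assignments
    intro s j tb hmem'
    rw [hstep2, List.append_assoc, List.mem_append] at hmem'
    rcases hmem' with h | h
    · exact Or.inl h
    · right
      rw [List.mem_append] at h
      have key : s ∈ dq ∧ j = i + 1 ∧ (if tb then b j ≤ a s else a s ≤ a j) := by
        rcases h with h | h
        · rw [List.mem_map] at h
          obtain ⟨x, hx, hx2⟩ := h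
          obtain ⟨rfl, rfl, rfl⟩ : x = s ∧ i + 1 = j ∧ false = tb := by
            simpa [Prod.ext_iff] using hx2
          have := List.mem_takeWhile_imp hx
          simp only [hp, decide_eq_true_eq] at this
          exact ⟨(List.takeWhile_sublist p).mem hx, rfl, by simpa using this⟩
        · rw [List.mem_map] at h
          obtain ⟨x, hx, hx2⟩ := h
          have hsmem : x ∈ dq := hdq1sub.mem
            (List.mem_reverse.1 ((List.takeWhile_sublist q).mem hx))
          have hqx := List.mem_takeWhile_imp hx
          simp only [hq, decide_eq_true_eq] at hqx
          obtain ⟨rfl, rfl, rfl⟩ : x = s ∧ i + 1 = j ∧ true = tb := by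
            simpa [Prod.ext_iff] using hx2
          exact ⟨hsmem, rfl, by simpa using hqx⟩
      obtain ⟨hsdq, rfl, hcond⟩ := key
      obtain ⟨h1, h2, h3⟩ := (hmem s).1 hsdq
      exact ⟨h1, by omega, rfl, hcond, fun l hl1 hl2 => h3 l hl1 (by omega)⟩

lemma rayRun_invariant (a b : ℕ → ℝ) (i : ℕ) (hi : 1 ≤ i) :
    ((rayRun a b i).1.Pairwise (fun s s' => a s < a s') ∧
      (∀ s, s ∈ (rayRun a b i).1 ↔
        1 ≤ s ∧ s ≤ i ∧ ∀ j, s < j → j ≤ i → ¬(a s ≤ a j) ∧ ¬(b j ≤ a s))) ∧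
    (∀ s j tb, (s, j, tb) ∈ (rayRun a b i).2 →
      1 ≤ s ∧ s < j ∧ j ≤ i ∧ (if tb then b j ≤ a s else a s ≤ a j) ∧
        ∀ l, s < l → l < j → ¬(a s ≤ a l) ∧ ¬(b l ≤ a s)) := by
  induction i with
  | zero => omega
  | succ n ih =>
    rcases Nat.lt_or_ge n 1 with hn | hn
    · -- n = 0, i = 1
      have : n = 0 := by omega
      subst this
      rw [rayRun_one]
      refine ⟨⟨by simp, fun s => ?_⟩, by simp⟩
      simp only [List.mem_singleton]
      constructor
      · rintro rfl
        exact ⟨le_refl _, le_refl _, fun j h1 h2 => absurd h1 (by omega)⟩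
      · rintro ⟨h1, h2, _⟩; omega
    · obtain ⟨⟨hsort, hmem⟩, hasg⟩ := ih hn
      rw [rayRun_succ a b n hn]
      obtain ⟨h1, h2, h3⟩ :=
        rayStep_spec a b n (rayRun a b n).1 (rayRun a b n).2 hn hsort hmem
      refine ⟨⟨h1, h2⟩, ?_⟩
      intro s j tb hm
      rcases h3 s j tb hm with h | ⟨hb1, hb2, hb3, hb4, hb5⟩
      · obtain ⟨c1, c2, c3, c4, c5⟩ := hasg s j tb h
        exact ⟨c1, c2, by omega, c4, c5⟩
      · exact ⟨hb1, hb2, by omega, hb4, hb5⟩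

theorem rayShooting_correct (a b : ℕ → ℝ) (m : ℕ) (hm : 1 ≤ m)
    (hab : ∀ i, 1 ≤ i → i ≤ m → 0 ≤ a i ∧ a i ≤ b i ∧ b i ≤ 1) :
    (∀ i, 1 ≤ i → i ≤ m →
      ((rayRun a b i).1.Pairwise (fun s s' => a s < a s') ∧
        ∀ s, s ∈ (rayRun a b i).1 ↔
          (1 ≤ s ∧ s ≤ i ∧ ∀ j, s < j → j ≤ i → ¬ (a s ≤ a j) ∧ ¬ (b j ≤ a s)))) ∧
    (∀ s j tb, (s, j, tb) ∈ (rayRun a b m).2 →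
      1 ≤ s ∧ s < j ∧ j ≤ m ∧ (if tb then b j ≤ a s else a s ≤ a j) ∧
        ∀ l, s < l → l < j → ¬ (a s ≤ a l) ∧ ¬ (b l ≤ a s)) := by
  refine ⟨fun i hi him => ((rayRun_invariant a b i hi).1), fun s j tb h => ?_⟩
  obtain ⟨c1, c2, c3, c4, c5⟩ := (rayRun_invariant a b m hm).2 s j tb h
  exact ⟨c1, c2, c3, c4, c5⟩
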